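/- arXiv:1006.4780 — 2 statements merged into one kernel-verified Lean document; each statement's English description precedes it below -/
import Mathlib

section
/- Let ι be a finite index type, let n : ι → ℕ with n_i ≥ 1 for all i, and let m ≥ 0. Let S := (Σ i : ι, Fin (n_i)) ⊕ Fin m and work in the free abelian group ℤ^S with standard basis (e_x)_{x ∈ S}. Define L₁ to be the subgroup generated by {e_{inl(i,k)} - e_{inl(i,l)} : i ∈ ι, k ≠ l} ∪ {e_{inr(k)} - e_{inr(l)} : k ≠ l} ∪ {e_{inr(k)} + e_{inr(l)} : k ≠ l} ∪ {e_{inr(k)} : k ∈ Fin m}, and L₂ to be the subgroup generated by the same set with the last family replaced by {2·e_{inr(k)} : k ∈ Fin m}. Then L₂ ⊆ L₁; if m = 0 then L₂ = L₁; and if m ≥ 1 then L₂ has index 2 in L₁. -/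
private def phiHom (A : Type*) (m : ℕ) : ((A ⊕ Fin m) → ℤ) →+ ZMod 2 :=
  AddMonoidHom.mk' (fun x => ((∑ k : Fin m, x (Sum.inr k) : ℤ) : ZMod 2))
    (by
      intro x y
      simp [Finset.sum_add_distrib])

private lemma phi_inl {A : Type*} [DecidableEq A] {m : ℕ} (a : A) :
    phiHom A m (Pi.single (Sum.inl a) (1 : ℤ)) = 0 := by
  simp [phiHom, Pi.single_apply]

private lemma phi_inr {A : Type*} [DecidableEq A] {m : ℕ} (j : Fin m) :
    phiHom A m (Pi.single (Sum.inr j) (1 : ℤ)) = 1 := by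
  simp [phiHom, Pi.single_apply]

/-- Let `ι` be a finite index type, `n : ι → ℕ` with `n i ≥ 1`, and `m ≥ 0`.
Let `S := (Σ i, Fin (n i)) ⊕ Fin m` and let `e x = Pi.single x 1` be the standard basis of
`ℤ^S = (S → ℤ)`.  Let `L₁` be the subgroup generated by the differences of basis vectors
within each `GL`-block, together with `e (inr k) - e (inr l)`, `e (inr k) + e (inr l)`
(`k ≠ l`) and `e (inr k)` (the coroot lattice of the Levi `M₁ = ∏ GL(n i) × Sp(2m)`), and
let `L₂` be generated by the same set with the last family replaced by `2 • e (inr k)`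
(the coroot lattice of the corresponding Levi `M₂` of `Spin(2n+1)`).  Then `L₂ ⊆ L₁`;
if `m = 0` then `L₂ = L₁`; and if `m ≥ 1` then `L₂` has index `2` in `L₁`. -/
theorem levi_coroot_lattice_index {ι : Type*} [Fintype ι] [DecidableEq ι]
    (n : ι → ℕ) (hn : ∀ i, 1 ≤ n i) (m : ℕ) :
    ∀ (base : Set (((Σ i : ι, Fin (n i)) ⊕ Fin m) → ℤ)),
      base =
        ({w | ∃ (i : ι) (k l : Fin (n i)), k ≠ l ∧
            w = Pi.single (Sum.inl ⟨i, k⟩) 1 - Pi.single (Sum.inl ⟨i, l⟩) 1} ∪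
         {w | ∃ k l : Fin m, k ≠ l ∧
            w = Pi.single (Sum.inr k) 1 - Pi.single (Sum.inr l) 1} ∪
         {w | ∃ k l : Fin m, k ≠ l ∧
            w = Pi.single (Sum.inr k) 1 + Pi.single (Sum.inr l) 1}) →
      ∀ (L₁ L₂ : AddSubgroup (((Σ i : ι, Fin (n i)) ⊕ Fin m) → ℤ)),
        L₁ = AddSubgroup.closure
          (base ∪ {w | ∃ k : Fin m, w = Pi.single (Sum.inr k) 1}) →
        L₂ = AddSubgroup.closure
          (base ∪ {w | ∃ k : Fin m, w = (2 : ℤ) • Pi.single (Sum.inr k) 1}) →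
        L₂ ≤ L₁ ∧ (m = 0 → L₂ = L₁) ∧ (1 ≤ m → L₂.relIndex L₁ = 2) := by
  intro base hbase L₁ L₂ h1 h2
  have hbaseL1 : base ⊆ (L₁ : Set _) := by
    rw [h1]; exact Set.subset_union_left.trans AddSubgroup.subset_closure
  have hbaseL2 : base ⊆ (L₂ : Set _) := by
    rw [h2]; exact Set.subset_union_left.trans AddSubgroup.subset_closure
  have hek : ∀ k : Fin m, Pi.single (Sum.inr k) (1:ℤ) ∈ L₁ := by
    intro k; rw [h1]; exact AddSubgroup.subset_closure (Or.inr ⟨k, rfl⟩)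
  have h2ek : ∀ k : Fin m, (2:ℤ) • Pi.single (Sum.inr k) (1:ℤ) ∈ L₂ := by
    intro k; rw [h2]; exact AddSubgroup.subset_closure (Or.inr ⟨k, rfl⟩)
  have hle : L₂ ≤ L₁ := by
    rw [h2]
    refine (AddSubgroup.closure_le _).mpr ?_
    rintro w (hw | ⟨k, rfl⟩)
    · exact hbaseL1 hw
    · rw [two_zsmul]; exact L₁.add_mem (hek k) (hek k)
  refine ⟨hle, ?_, ?_⟩
  · rintro rfl
    have hA : {w : ((Σ i : ι, Fin (n i)) ⊕ Fin 0) → ℤ |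
        ∃ k : Fin 0, w = Pi.single (Sum.inr k) 1} = ∅ :=
      Set.eq_empty_of_forall_notMem (by rintro w ⟨k, _⟩; exact k.elim0)
    have hB : {w : ((Σ i : ι, Fin (n i)) ⊕ Fin 0) → ℤ |
        ∃ k : Fin 0, w = (2:ℤ) • Pi.single (Sum.inr k) 1} = ∅ :=
      Set.eq_empty_of_forall_notMem (by rintro w ⟨k, _⟩; exact k.elim0)
    rw [h1, h2, hA, hB]
  · intro hm
    have hm' : 0 < m := hm
    set k0 : Fin m := ⟨0, hm'⟩ with hk0
    -- L₂ is inside the kernel of φ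
    have hL2ker : L₂ ≤ (phiHom ((i : ι) × Fin (n i)) m).ker := by
      rw [h2, hbase]
      refine (AddSubgroup.closure_le _).mpr ?_
      intro w hw
      simp only [Set.mem_union, Set.mem_setOf_eq] at hw
      rcases hw with (((⟨i, k, l, hkl, rfl⟩ | ⟨k, l, hkl, rfl⟩) | ⟨k, l, hkl, rfl⟩) | ⟨k, rfl⟩)
      · simp only [SetLike.mem_coe, AddMonoidHom.mem_ker, map_sub, phi_inl, sub_self]
      · simp only [SetLike.mem_coe, AddMonoidHom.mem_ker, map_sub, phi_inr, sub_self]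
      · simp only [SetLike.mem_coe, AddMonoidHom.mem_ker, map_add, phi_inr]
        decide
      · simp only [SetLike.mem_coe, AddMonoidHom.mem_ker, map_zsmul, phi_inr]
        decide
    -- L₁ is contained in L₂ ⊔ ℤ·e
    have hsup : L₁ ≤ L₂ ⊔ AddSubgroup.zmultiples (Pi.single (Sum.inr k0) (1:ℤ)) := by
      rw [h1]
      refine (AddSubgroup.closure_le _).mpr ?_
      intro w hw
      rcases hw with hw | ⟨k, rfl⟩
      · exact AddSubgroup.mem_sup_left (hbaseL2 hw)
      · by_cases hk : k = k0
        · subst hk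
          exact AddSubgroup.mem_sup_right (AddSubgroup.mem_zmultiples _)
        · have hb : (Pi.single (Sum.inr k) (1:ℤ) - Pi.single (Sum.inr k0) 1) ∈ base := by
            rw [hbase]; exact Or.inl (Or.inr ⟨k, k0, hk, rfl⟩)
          have : (Pi.single (Sum.inr k) 1 : ((i : ι) × Fin (n i)) ⊕ Fin m → ℤ) =
              (Pi.single (Sum.inr k) 1 - Pi.single (Sum.inr k0) 1) +
                Pi.single (Sum.inr k0) 1 := by abel
          rw [this]
          exact AddSubgroup.add_mem _ (AddSubgroup.mem_sup_left (hbaseL2 hb))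
            (AddSubgroup.mem_sup_right (AddSubgroup.mem_zmultiples _))
    set ψ : L₁ →+ ZMod 2 := (phiHom ((i : ι) × Fin (n i)) m).comp L₁.subtype with hψ
    have hker : ψ.ker = L₂.addSubgroupOf L₁ := by
      ext ⟨x, hx⟩
      simp only [hψ, AddMonoidHom.mem_ker, AddMonoidHom.comp_apply, AddSubgroup.coe_subtype,
        AddSubgroup.mem_addSubgroupOf]
      constructor
      · intro h0
        obtain ⟨y, hy, z, hz, rfl⟩ := (AddSubgroup.mem_sup).mp (hsup hx)
        obtain ⟨c, rfl⟩ := AddSubgroup.mem_zmultiples_iff.mp hz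
        have hy0 : phiHom ((i : ι) × Fin (n i)) m y = 0 := hL2ker hy
        have hc : (c : ZMod 2) = 0 := by
          rw [map_add, hy0, zero_add, map_zsmul, phi_inr, zsmul_one] at h0
          exact h0
        obtain ⟨d, rfl⟩ := (ZMod.intCast_zmod_eq_zero_iff_dvd c 2).mp hc
        refine L₂.add_mem hy ?_
        rw [show ((2:ℕ):ℤ) = 2 by norm_num]
        have : ((2 * d) • Pi.single (Sum.inr k0) 1 : ((i : ι) × Fin (n i)) ⊕ Fin m → ℤ) =
            d • ((2:ℤ) • Pi.single (Sum.inr k0) 1) := by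
          rw [smul_smul, mul_comm]
        rw [this]
        exact AddSubgroup.zsmul_mem _ (h2ek k0) d
      · intro hx2
        exact hL2ker hx2
    have hsurj : Function.Surjective ψ := by
      intro z
      obtain ⟨c, rfl⟩ := ZMod.intCast_surjective z
      refine ⟨c • ⟨_, hek k0⟩, ?_⟩
      have : ψ (⟨_, hek k0⟩ : L₁) = 1 := by
        simp only [hψ, AddMonoidHom.comp_apply, AddSubgroup.coe_subtype]
        exact phi_inr k0
      rw [map_zsmul, this, zsmul_one]
    have : L₂.relIndex L₁ = ψ.ker.index := by rw [hker]; rfl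
    rw [this, AddSubgroup.index_ker, AddMonoidHom.range_eq_top.mpr hsurj,
      AddSubgroup.card_top, Nat.card_zmod]
end

section
/- Let ι be a finite index type, n : ι → ℕ with n_i ≥ 1 for all i, m ≥ 0, and assume S := (Σ i : ι, Fin (n_i)) ⊕ Fin m is nonempty. In the free abelian group ℤ^S with standard basis (e_x), define the ambient lattices L₁^G := the subgroup generated by {e_x - e_y : x ≠ y} ∪ {e_x + e_y : x ≠ y} ∪ {e_x : x ∈ S} (which equals all of ℤ^S) and L₂^G := the subgroup generated by {e_x - e_y : x ≠ y} ∪ {e_x + e_y : x ≠ y} ∪ {2·e_x : x ∈ S}; define the Levi lattices L₁^M, L₂^M as the subgroups generated by the corresponding block-restricted sets: {e_{inl(i,k)} - e_{inl(i,l)} : i ∈ ι, k ≠ l} together with {e_{inr(k)} ± e_{inr(l)} : k ≠ l} and {e_{inr(k)}} (resp. {2·e_{inr(k)}}) for L₁^M (resp. L₂^M). Then the rational number ([L₁^M : L₂^M]) / ([L₁^G : L₂^G]) equals 1 if m ≥ 1 and equals 1/2 if m = 0; that is, the non-standard endoscopic coefficient c^{G₁,G₂}_{M₁,M₂} = [R₂^Γ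 : j_*(R₁^Γ)]/[R^{M₂,Γ} : j_*(R^{M₁,Γ})] equals 1 if m ≠ 0 and 1/2 if m = 0. -/
open Finset

section Aux

variable {S : Type*} [Fintype S] [DecidableEq S]

/-- Sum-of-coordinates mod 2 homomorphism. -/
def sigma2 (S : Type*) [Fintype S] : (S → ℤ) →+ ZMod 2 where
  toFun w := ∑ x, (w x : ZMod 2)
  map_zero' := by simp
  map_add' a b := by simp [Finset.sum_add_distrib]

lemma sigma2_single (x : S) (c : ℤ) : sigma2 S (Pi.single x c) = (c : ZMod 2) := by
  simp only [sigma2, AddMonoidHom.coe_mk, ZeroHom.coe_mk, Pi.single_apply,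
    apply_ite (Int.cast : ℤ → ZMod 2), Int.cast_zero]
  simp

omit [Fintype S] in
lemma smul_single_one (c : ℤ) (x : S) :
    c • (Pi.single x 1 : S → ℤ) = Pi.single x c := by
  funext y
  by_cases h : y = x <;> simp [Pi.single_apply, h]

lemma sum_decomp (w : S → ℤ) (x₀ : S) :
    w = (∑ x, w x • (Pi.single x (1:ℤ) - Pi.single x₀ 1)) + (∑ x, w x) • Pi.single x₀ (1:ℤ) := by
  funext y
  simp only [Pi.add_apply, Finset.sum_apply, Pi.smul_apply, Pi.sub_apply, Pi.single_apply,
    smul_eq_mul, mul_sub, Finset.sum_sub_distrib, mul_ite, mul_one, mul_zero,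
    Finset.sum_ite_eq, Finset.mem_univ, if_true]
  by_cases h : y = x₀ <;> simp [h]

lemma even_mem (H : AddSubgroup (S → ℤ)) (w : S → ℤ) (x₀ : S)
    (hdiff : ∀ x : S, Pi.single x (1:ℤ) - Pi.single x₀ 1 ∈ H)
    (h2 : (2:ℤ) • Pi.single x₀ (1:ℤ) ∈ H) (hw : (2:ℤ) ∣ ∑ x, w x) : w ∈ H := by
  obtain ⟨k, hk⟩ := hw
  rw [sum_decomp w x₀]
  refine add_mem (sum_mem fun x _ => zsmul_mem (hdiff x) _) ?_
  rw [hk, mul_comm, mul_smul]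
  exact zsmul_mem h2 k

omit [DecidableEq S] in
lemma mem_ker_iff (w : S → ℤ) : w ∈ (sigma2 S).ker ↔ (2:ℤ) ∣ ∑ x, w x := by
  rw [AddMonoidHom.mem_ker]
  have : (sigma2 S) w = ((∑ x, w x : ℤ) : ZMod 2) := by
    rw [Int.cast_sum]; rfl
  rw [this, ZMod.intCast_zmod_eq_zero_iff_dvd]
  norm_num

lemma sigma2_surj (x₀ : S) : Function.Surjective (sigma2 S) := by
  intro c
  obtain ⟨k, rfl⟩ := ZMod.intCast_surjective c
  refine ⟨k • Pi.single x₀ (1:ℤ), ?_⟩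
  rw [map_zsmul, sigma2_single]
  simp [zsmul_eq_mul]

end Aux

/-- With `S := (Σ i, Fin (n i)) ⊕ Fin m` nonempty and
`e x = Pi.single x 1` the standard basis of `ℤ^S`, let `L₁G` (resp. `L₂G`) be the coroot
lattice of `G₁ = Sp(2n)` (resp. `G₂ = Spin(2n+1)`), generated by all `e x - e y`,
`e x + e y` (`x ≠ y`) and all `e x` (resp. all `2 • e x`); `L₁G` equals all of `ℤ^S`.
Let `L₁M`, `L₂M` be the coroot lattices of the corresponding Levi subgroups, generated
by the block-restricted sets.  Then the non-standard endoscopic coefficient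
`c^{G₁,G₂}_{M₁,M₂} = [L₁M : L₂M] / [L₁G : L₂G]` equals `1` if `m ≥ 1` and `1/2` if
`m = 0`. -/
theorem nonstandard_endoscopic_coefficient {ι : Type*} [Fintype ι] [DecidableEq ι]
    (n : ι → ℕ) (hn : ∀ i, 1 ≤ n i) (m : ℕ)
    (hS : Nonempty ((Σ i : ι, Fin (n i)) ⊕ Fin m)) :
    ∀ (baseG baseM : Set (((Σ i : ι, Fin (n i)) ⊕ Fin m) → ℤ)),
      baseG =
        ({w | ∃ x y : (Σ i : ι, Fin (n i)) ⊕ Fin m, x ≠ y ∧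
            w = Pi.single x 1 - Pi.single y 1} ∪
         {w | ∃ x y : (Σ i : ι, Fin (n i)) ⊕ Fin m, x ≠ y ∧
            w = Pi.single x 1 + Pi.single y 1}) →
      baseM =
        ({w | ∃ (i : ι) (k l : Fin (n i)), k ≠ l ∧
            w = Pi.single (Sum.inl ⟨i, k⟩) 1 - Pi.single (Sum.inl ⟨i, l⟩) 1} ∪
         {w | ∃ k l : Fin m, k ≠ l ∧
            w = Pi.single (Sum.inr k) 1 - Pi.single (Sum.inr l) 1} ∪
         {w | ∃ k l : Fin m, k ≠ l ∧
            w = Pi.single (Sum.inr k) 1 + Pi.single (Sum.inr l) 1}) →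
      ∀ (L₁G L₂G L₁M L₂M : AddSubgroup (((Σ i : ι, Fin (n i)) ⊕ Fin m) → ℤ)),
        L₁G = AddSubgroup.closure
          (baseG ∪ {w | ∃ x : (Σ i : ι, Fin (n i)) ⊕ Fin m, w = Pi.single x 1}) →
        L₂G = AddSubgroup.closure
          (baseG ∪ {w | ∃ x : (Σ i : ι, Fin (n i)) ⊕ Fin m,
            w = (2 : ℤ) • Pi.single x 1}) →
        L₁M = AddSubgroup.closure
          (baseM ∪ {w | ∃ k : Fin m, w = Pi.single (Sum.inr k) 1}) →
        L₂M = AddSubgroup.closure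
          (baseM ∪ {w | ∃ k : Fin m, w = (2 : ℤ) • Pi.single (Sum.inr k) 1}) →
        L₁G = ⊤ ∧
        ((L₂M.relIndex L₁M : ℚ) / (L₂G.relIndex L₁G : ℚ) =
          if m = 0 then 1 / 2 else 1) := by
  intro baseG baseM hbG hbM L₁G L₂G L₁M L₂M h1G h2G h1M h2M
  subst hbG hbM
  obtain ⟨x₀⟩ := hS
  -- L₁G = ⊤
  have htop : L₁G = ⊤ := by
    rw [h1G, eq_top_iff]
    intro w _
    have hw : w = ∑ x, (w x) • Pi.single x (1:ℤ) := by
      simp_rw [smul_single_one, Finset.univ_sum_single]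
    rw [hw]
    refine sum_mem fun x _ => zsmul_mem ?_ _
    exact AddSubgroup.subset_closure (Set.mem_union_right _ ⟨x, rfl⟩)
  refine ⟨htop, ?_⟩
  -- L₂G = ker σ
  have hL2G : L₂G = (sigma2 _).ker := by
    rw [h2G]
    apply le_antisymm
    · rw [AddSubgroup.closure_le]
      rintro w ((⟨x, y, hxy, rfl⟩ | ⟨x, y, hxy, rfl⟩) | ⟨x, rfl⟩)
      · simp only [SetLike.mem_coe, AddMonoidHom.mem_ker, map_sub, sigma2_single]
        simp
      · simp only [SetLike.mem_coe, AddMonoidHom.mem_ker, map_add, sigma2_single]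
        decide
      · simp only [SetLike.mem_coe, AddMonoidHom.mem_ker, map_zsmul, sigma2_single]
        decide
    · intro w hw
      rw [mem_ker_iff] at hw
      refine even_mem _ w x₀ (fun x => ?_) ?_ hw
      · by_cases h : x = x₀
        · subst h; rw [sub_self]; exact zero_mem _
        · exact AddSubgroup.subset_closure (Set.mem_union_left _ (Set.mem_union_left _ ⟨x, x₀, h, rfl⟩))
      · exact AddSubgroup.subset_closure (Set.mem_union_right _ ⟨x₀, rfl⟩)
  -- [L₁G : L₂G] = 2
  have hidxG : L₂G.relIndex L₁G = 2 := by
    rw [htop, AddSubgroup.relIndex_top_right, hL2G, AddSubgroup.index_ker,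
      AddMonoidHom.range_eq_top.mpr (sigma2_surj x₀)]
    rw [Nat.card_congr AddSubgroup.topEquiv.toEquiv, Nat.card_zmod]
  by_cases hm : m = 0
  · -- m = 0 : L₁M = L₂M
    have hempty : IsEmpty (Fin m) := by rw [hm]; infer_instance
    have hMeq : L₁M = L₂M := by
      rw [h1M, h2M]
      congr 1
      ext w
      simp only [Set.mem_union, Set.mem_setOf_eq]
      constructor
      · rintro (h | ⟨k, -⟩)
        · exact Or.inl h
        · exact (hempty.false k).elim
      · rintro (h | ⟨k, -⟩)
        · exact Or.inl h
        · exact (hempty.false k).elim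
    rw [hMeq, AddSubgroup.relIndex_self, hidxG, if_pos hm]
    norm_num
  · -- m ≠ 0
    obtain ⟨k₀⟩ : Nonempty (Fin m) := ⟨⟨0, Nat.pos_of_ne_zero hm⟩⟩
    have he₀M1 : Pi.single (Sum.inr k₀) (1:ℤ) ∈ L₁M := by
      rw [h1M]
      exact AddSubgroup.subset_closure (Set.mem_union_right _ ⟨k₀, rfl⟩)
    have hM21 : L₂M ≤ L₁M := by
      rw [h2M, h1M, AddSubgroup.closure_le]
      rintro w (hb | ⟨k, rfl⟩)
      · exact AddSubgroup.subset_closure (Set.mem_union_left _ hb)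
      · refine zsmul_mem ?_ 2
        exact AddSubgroup.subset_closure (Set.mem_union_right _ ⟨k, rfl⟩)
    have hM2ker : L₂M ≤ (sigma2 _).ker := by
      rw [h2M, AddSubgroup.closure_le]
      rintro w ((((⟨i, k, l, hkl, rfl⟩ | ⟨k, l, hkl, rfl⟩) | ⟨k, l, hkl, rfl⟩)) | ⟨k, rfl⟩)
      · simp only [SetLike.mem_coe, AddMonoidHom.mem_ker, map_sub, sigma2_single]
        simp
      · simp only [SetLike.mem_coe, AddMonoidHom.mem_ker, map_sub, sigma2_single]
        simp
      · simp only [SetLike.mem_coe, AddMonoidHom.mem_ker, map_add, sigma2_single]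
        decide
      · simp only [SetLike.mem_coe, AddMonoidHom.mem_ker, map_zsmul, sigma2_single]
        decide
    have hsup : L₁M ≤ L₂M ⊔ AddSubgroup.closure {Pi.single (Sum.inr k₀) (1:ℤ)} := by
      rw [h1M, AddSubgroup.closure_le]
      rintro w (hb | ⟨k, rfl⟩)
      · refine SetLike.le_def.mp le_sup_left ?_
        rw [h2M]
        exact AddSubgroup.subset_closure (Set.mem_union_left _ hb)
      · by_cases hk : k = k₀
        · subst hk
          exact SetLike.le_def.mp le_sup_right (AddSubgroup.subset_closure (Set.mem_singleton _))
        · have hrw : (Pi.single (Sum.inr k) 1 : ((Σ i : ι, Fin (n i)) ⊕ Fin m) → ℤ)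
              = (Pi.single (Sum.inr k) 1 - Pi.single (Sum.inr k₀) 1)
                + Pi.single (Sum.inr k₀) 1 := by abel
          rw [hrw]
          refine add_mem (SetLike.le_def.mp le_sup_left ?_)
            (SetLike.le_def.mp le_sup_right (AddSubgroup.subset_closure (Set.mem_singleton _)))
          rw [h2M]
          exact AddSubgroup.subset_closure (Set.mem_union_left _
            (Set.mem_union_left _ (Set.mem_union_right _ ⟨k, k₀, hk, rfl⟩)))
    have hinf : L₁M ⊓ (sigma2 _).ker = L₂M := by
      apply le_antisymm
      · rintro w ⟨hw1, hw2⟩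
        obtain ⟨v, hv, z, hz, rfl⟩ := AddSubgroup.mem_sup.mp (hsup hw1)
        obtain ⟨t, rfl⟩ := AddSubgroup.mem_closure_singleton.mp hz
        have hσv : sigma2 _ v = 0 := hM2ker hv
        have hσ : sigma2 _ (v + t • Pi.single (Sum.inr k₀) (1:ℤ)) = 0 := hw2
        rw [map_add, hσv, zero_add, map_zsmul, sigma2_single, Int.cast_one] at hσ
        have ht : (2:ℤ) ∣ t := by
          have h0 : ((t : ℤ) : ZMod 2) = 0 := by rwa [zsmul_eq_mul, mul_one] at hσ
          exact_mod_cast (ZMod.intCast_zmod_eq_zero_iff_dvd t 2).mp h0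
        obtain ⟨u, rfl⟩ := ht
        refine add_mem hv ?_
        rw [mul_comm, mul_smul]
        refine zsmul_mem ?_ u
        rw [h2M]
        exact AddSubgroup.subset_closure (Set.mem_union_right _ ⟨k₀, rfl⟩)
      · exact le_inf hM21 hM2ker
    have hidxM : L₂M.relIndex L₁M = 2 := by
      rw [← hinf, AddSubgroup.inf_relIndex_left, AddSubgroup.relIndex_ker]
      have hmap : L₁M.map (sigma2 _) = ⊤ := by
        rw [eq_top_iff]
        intro c _
        obtain ⟨t, rfl⟩ := ZMod.intCast_surjective c
        have h1 : (1 : ZMod 2) ∈ L₁M.map (sigma2 _) :=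
          ⟨Pi.single (Sum.inr k₀) 1, he₀M1, by rw [sigma2_single, Int.cast_one]⟩
        have h2 := zsmul_mem h1 t
        rwa [zsmul_eq_mul, mul_one] at h2
      rw [hmap, Nat.card_congr AddSubgroup.topEquiv.toEquiv, Nat.card_zmod]
    rw [hidxM, hidxG, if_neg hm]
    norm_num
end
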